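/- Every graph G of treewidth at most k and maximum degree Δ has strong chromatic index at most (k+1)(Δ+1). -/

import Mathlib

/-- Two edges are at distance at most one: they share a vertex or
an endpoint of one is adjacent to an endpoint of the other. -/
def edgeNear {V : Type} (G : SimpleGraph V) (e f : Sym2 V) : Prop :=
  ∃ a ∈ e, ∃ b ∈ f, a = b ∨ G.Adj a b

/-- A set of edges is an induced matching of `G`. -/
def IsInducedMatching {V : Type} (G : SimpleGraph V) (M : Set (Sym2 V)) : Prop :=
  M ⊆ G.edgeSet ∧
    ∀ e ∈ M, ∀ f ∈ M, e ≠ f → ∀ a ∈ e, ∀ b ∈ f, a ≠ b ∧ ¬ G.Adj a b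

/-- An edge coloring is strong if every color class is an induced matching. -/
def IsStrongEdgeColoring {V : Type} {α : Type} (G : SimpleGraph V) (c : Sym2 V → α) : Prop :=
  ∀ k : α, IsInducedMatching G {e | e ∈ G.edgeSet ∧ c e = k}

/-- The strong chromatic index: least number of colors in a strong edge coloring. -/
noncomputable def strongChromaticIndex {V : Type} (G : SimpleGraph V) : ℕ :=
  sInf {n : ℕ | ∃ c : Sym2 V → Fin n, IsStrongEdgeColoring G c}

/-- `G` is `k`-degenerate: every (induced) subgraph has a vertex of degree at most `k`. -/
def Degenerate {V : Type} (G : SimpleGraph V) (k : ℕ) : Prop :=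
  ∀ s : Set V, s.Nonempty → ∃ v ∈ s, (G.neighborSet v ∩ s).ncard ≤ k

/-- A vertex is nice: it has a neighbor of degree at most `k` and
at most `k` neighbors of degree strictly greater than `k`. -/
def IsNice {V : Type} (G : SimpleGraph V) (k : ℕ) (v : V) : Prop :=
  (∃ w, G.Adj v w ∧ (G.neighborSet w).ncard ≤ k) ∧
    {w | G.Adj v w ∧ k < (G.neighborSet w).ncard}.ncard ≤ k

/-- A graph is chordless if every cycle is induced: any edge joining two
vertices of a cycle is an edge of the cycle. -/
def Chordless {V : Type} (G : SimpleGraph V) : Prop :=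
  ∀ (v : V) (c : G.Walk v v), c.IsCycle →
    ∀ a ∈ c.support, ∀ b ∈ c.support, G.Adj a b → s(a, b) ∈ c.edges

/-- `G` has treewidth at most `k`, via tree decompositions. -/
def TreewidthAtMost {V : Type} (G : SimpleGraph V) (k : ℕ) : Prop :=
  ∃ (ι : Type) (T : SimpleGraph ι) (B : ι → Finset V),
    T.Connected ∧ T.IsAcyclic ∧
    (∀ v : V, ∃ i, v ∈ B i) ∧
    (∀ ⦃u v : V⦄, G.Adj u v → ∃ i, u ∈ B i ∧ v ∈ B i) ∧
    (∀ v : V, (T.induce {i | v ∈ B i}).Connected) ∧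
    (∀ i, (B i).card ≤ k + 1)

/-- `H` is a minor of `G`, via branch sets. -/
def IsMinor {W V : Type} (H : SimpleGraph W) (G : SimpleGraph V) : Prop :=
  ∃ φ : W → Set V,
    (∀ w, (φ w).Nonempty) ∧
    (Pairwise fun a b => Disjoint (φ a) (φ b)) ∧
    (∀ w, (G.induce (φ w)).Connected) ∧
    (∀ a b, H.Adj a b → ∃ x ∈ φ a, ∃ y ∈ φ b, G.Adj x y)

/-- A set of edges forming a matching (pairwise non-incident edges of `G`). -/
def IsMatchingSet {V : Type} (G : SimpleGraph V) (M : Set (Sym2 V)) : Prop :=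
  M ⊆ G.edgeSet ∧ ∀ e ∈ M, ∀ f ∈ M, e ≠ f → ∀ a ∈ e, a ∉ f


namespace StrongColoringAux

open SimpleGraph

variable {ι : Type} {T : SimpleGraph ι}

/-- A set of tree nodes is path-closed: any two of its elements are joined by a
path of `T` whose support stays inside the set. -/
def PC (T : SimpleGraph ι) (A : Set ι) : Prop :=
  ∀ i ∈ A, ∀ j ∈ A, ∃ p : T.Walk i j, p.IsPath ∧ ∀ m ∈ p.support, m ∈ A

lemma path_eq (ha : T.IsAcyclic) {i j : ι} {p q : T.Walk i j} (hp : p.IsPath) (hq : q.IsPath) :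
    p = q := by
  have := (SimpleGraph.isAcyclic_iff_path_unique.mp ha) (⟨p, hp⟩ : T.Path i j) ⟨q, hq⟩
  exact congrArg Subtype.val this

lemma pc_of_walks {A : Set ι}
    (h : ∀ i ∈ A, ∀ j ∈ A, ∃ w : T.Walk i j, ∀ m ∈ w.support, m ∈ A) : PC T A := by
  classical
  intro i hi j hj
  obtain ⟨w, hw⟩ := h i hi j hj
  exact ⟨w.bypass, w.bypass_isPath, fun m hm => hw m (w.support_bypass_subset hm)⟩

lemma pc_inter (ha : T.IsAcyclic) {A B : Set ι} (hA : PC T A) (hB : PC T B) :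
    PC T (A ∩ B) := by
  intro i hi j hj
  obtain ⟨p, hp, hpA⟩ := hA i hi.1 j hj.1
  obtain ⟨q, hq, hqB⟩ := hB i hi.2 j hj.2
  refine ⟨p, hp, fun m hm => ⟨hpA m hm, ?_⟩⟩
  exact hqB m (by rwa [path_eq ha hp hq] at hm)

lemma isPath_length_eq_dist (hc : T.Connected) (ha : T.IsAcyclic) {i j : ι} {p : T.Walk i j}
    (hp : p.IsPath) : p.length = T.dist i j := by
  classical
  obtain ⟨w, hw⟩ := hc.exists_walk_length_eq_dist i j
  have h1 : w.bypass.length ≤ T.dist i j := hw ▸ w.length_bypass_le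
  have h2 : p = w.bypass := path_eq ha hp w.bypass_isPath
  exact le_antisymm (h2 ▸ h1) (SimpleGraph.dist_le p)

lemma pc_of_induce_connected {A : Set ι} (h : (T.induce A).Connected) : PC T A := by
  apply pc_of_walks
  intro i hi j hj
  obtain ⟨w⟩ := h.preconnected ⟨i, hi⟩ ⟨j, hj⟩
  refine ⟨w.map (SimpleGraph.Embedding.induce A).toHom, ?_⟩
  intro m hm
  replace hm : m ∈ (w.map (SimpleGraph.Embedding.induce A).toHom).support := hm
  rw [SimpleGraph.Walk.support_map] at hm
  obtain ⟨⟨m', hm'⟩, _, rfl⟩ := List.mem_map.mp hm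
  exact hm'


lemma core_aux {X : Type} (hc : T.Connected) (ha : T.IsAcyclic)
    (Bx : ι → Set X) (R : X → X → Prop) (S : Finset X) (hS : S.Nonempty)
    (hx2 : ∀ x ∈ S, PC T {i | x ∈ Bx i}) :
    ∀ (F : Finset ι), PC T ↑F →
      (∀ x ∈ S, ∃ i ∈ F, x ∈ Bx i) →
      (∀ x ∈ S, ∀ y ∈ S, R x y → ∃ i ∈ F, x ∈ Bx i ∧ y ∈ Bx i) →
      ∃ x ∈ S, ∃ i, x ∈ Bx i ∧ ∀ y ∈ S, R x y → y ∈ Bx i := by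
  classical
  intro F
  induction F using Finset.strongInduction with
  | _ F IH =>
    intro hPC hcov hcov2
    obtain ⟨x₁, hx₁⟩ := hS
    obtain ⟨i₁, hi₁F, hx₁i₁⟩ := hcov x₁ hx₁
    by_cases hcard : F.card ≤ 1
    · -- single node
      refine ⟨x₁, hx₁, i₁, hx₁i₁, fun y hy hR => ?_⟩
      obtain ⟨j, hjF, hxj, hyj⟩ := hcov2 x₁ hx₁ y hy hR
      have : j = i₁ := Finset.card_le_one.mp hcard j hjF i₁ hi₁F
      rwa [this] at hyj
    · push_neg at hcard
      -- pick the farthest node ℓ from x₀ := i₁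
      obtain ⟨ℓ, hℓF, hℓmax⟩ := F.exists_max_image (fun j => T.dist i₁ j) ⟨i₁, hi₁F⟩
      have hℓne : ℓ ≠ i₁ := by
        obtain ⟨j, hjF, hjne⟩ := Finset.exists_mem_ne hcard i₁
        have h1 : 0 < T.dist i₁ j := hc.pos_dist_of_ne (Ne.symm hjne)
        have h2 : 0 < T.dist i₁ ℓ := lt_of_lt_of_le h1 (hℓmax j hjF)
        intro h; rw [h, SimpleGraph.dist_self] at h2; exact h2.false
      obtain ⟨p, hp, hpF⟩ := hPC i₁ hi₁F ℓ hℓF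
      have hplen : p.length = T.dist i₁ ℓ := isPath_length_eq_dist hc ha hp
      have hppos : 0 < p.length := by
        rw [hplen]; exact hc.pos_dist_of_ne (Ne.symm hℓne)
      have hpnn : ¬ p.Nil := SimpleGraph.Walk.not_nil_iff_lt_length.mpr hppos
      have hprnn : ¬ p.reverse.Nil := by
        rw [SimpleGraph.Walk.not_nil_iff_lt_length, SimpleGraph.Walk.length_reverse]
        exact hppos
      set m₀ := p.reverse.getVert 1 with hm₀def
      have hm₀adj : T.Adj ℓ m₀ := p.reverse.adj_snd hprnn
      have hm₀sup : m₀ ∈ p.support := by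
        have : m₀ ∈ p.reverse.support :=
          SimpleGraph.Walk.mem_support_iff_exists_getVert.mpr
            ⟨1, rfl, by rw [SimpleGraph.Walk.length_reverse]; exact hppos⟩
        rwa [SimpleGraph.Walk.support_reverse, List.mem_reverse] at this
      -- CLAIM 1 (canonical form): any support-neighbor of ℓ is the head of this list
      have claim1' : ∀ w, T.Adj w ℓ → w ∈ p.support →
          (p.support.dropLast).reverse.head? = some w := by
        intro w hadj hw
        set q := p.takeUntil w hw with hqdef
        have hq : q.IsPath := hp.takeUntil hw
        have hsplit := p.take_spec hw
        have hsupp : p.support = q.support ++ (p.dropUntil w hw).support.tail := by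
          conv_lhs => rw [← hsplit]
          exact SimpleGraph.Walk.support_append _ _
        have hnodup : (q.support ++ (p.dropUntil w hw).support.tail).Nodup := by
          rw [← hsupp]; exact hp.support_nodup
        have hℓdrop : ℓ ∈ (p.dropUntil w hw).support.tail := by
          have h1 : ℓ ∈ (p.dropUntil w hw).support := SimpleGraph.Walk.end_mem_support _
          rw [SimpleGraph.Walk.support_eq_cons] at h1
          rcases List.mem_cons.mp h1 with h | h
          · exact absurd h.symm hadj.ne
          · exact h
        have hℓq : ℓ ∉ q.support := by
          rcases List.nodup_append'.mp hnodup with ⟨_, _, hdisj⟩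
          intro hmem; exact hdisj hmem hℓdrop
        set r := q.concat hadj with hrdef
        have hr : r.IsPath := by
          rw [← SimpleGraph.Walk.isPath_reverse_iff]
          rw [hrdef, SimpleGraph.Walk.reverse_concat]
          rw [SimpleGraph.Walk.cons_isPath_iff]
          refine ⟨hq.reverse, ?_⟩
          rwa [SimpleGraph.Walk.support_reverse, List.mem_reverse]
        have hrp : r = p := path_eq ha hr hp
        have hrsupp : p.support = q.support ++ [ℓ] := by
          rw [← hrp, hrdef, SimpleGraph.Walk.support_concat]
        have hdrop : p.support.dropLast = q.support := by
          rw [hrsupp, List.dropLast_concat]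
        rw [hdrop]
        have : q.support.reverse = q.reverse.support := (SimpleGraph.Walk.support_reverse _).symm
        rw [this, SimpleGraph.Walk.support_eq_cons]
        rfl
      have claim1 : ∀ w, T.Adj w ℓ → w ∈ p.support → w = m₀ := by
        intro w hadj hw
        have h1 := claim1' w hadj hw
        have h2 := claim1' m₀ hm₀adj.symm hm₀sup
        rw [h1] at h2; exact Option.some_injective _ h2
      -- CLAIM 2: fresh neighbors of ℓ are outside F
      have claim2 : ∀ w, T.Adj ℓ w → w ∉ p.support → w ∉ (F : Set ι) := by
        intro w hadj hwp hwF
        have hrpath : (p.concat hadj).IsPath := by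
          rw [← SimpleGraph.Walk.isPath_reverse_iff, SimpleGraph.Walk.reverse_concat,
            SimpleGraph.Walk.cons_isPath_iff]
          refine ⟨hp.reverse, ?_⟩
          rwa [SimpleGraph.Walk.support_reverse, List.mem_reverse]
        have hlen : (p.concat hadj).length = T.dist i₁ ℓ + 1 := by
          rw [SimpleGraph.Walk.length_concat, hplen]
        have hdw : T.dist i₁ w = T.dist i₁ ℓ + 1 := by
          rw [← isPath_length_eq_dist hc ha hrpath, hlen]
        have := hℓmax w hwF
        omega
      have conseq : ∀ w, T.Adj ℓ w → w ∈ (F : Set ι) → w = m₀ := by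
        intro w hadj hwF
        by_cases hwp : w ∈ p.support
        · exact claim1 w hadj.symm hwp
        · exact absurd hwF (claim2 w hadj hwp)
      have hm₀F : m₀ ∈ F := hpF m₀ hm₀sup
      have hm₀ne : m₀ ≠ ℓ := fun h => (hm₀adj.ne' h).elim
      -- CLAIM 3: ℓ is not on any F-path between other F-vertices
      have claim3 : ∀ y ∈ F.erase ℓ, ∀ z ∈ F.erase ℓ, ∀ (s : T.Walk y z), s.IsPath →
          (∀ a ∈ s.support, a ∈ (F : Set ι)) → ℓ ∉ s.support := by
        intro y hy z hz s hs hsF hℓs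
        have hyℓ : y ≠ ℓ := (Finset.mem_erase.mp hy).1
        have hzℓ : z ≠ ℓ := (Finset.mem_erase.mp hz).1
        set s₁ := s.takeUntil ℓ hℓs with hs₁def
        set s₂ := s.dropUntil ℓ hℓs with hs₂def
        have hs₁ : s₁.IsPath := hs.takeUntil hℓs
        have hs₂ : s₂.IsPath := hs.dropUntil hℓs
        have hs₁nn : ¬ s₁.Nil := by
          intro h
          exact hyℓ (SimpleGraph.Walk.eq_of_length_eq_zero
            (SimpleGraph.Walk.nil_iff_length_eq.mp h))
        have hs₂nn : ¬ s₂.Nil := by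
          intro h
          exact hzℓ (SimpleGraph.Walk.eq_of_length_eq_zero
            (SimpleGraph.Walk.nil_iff_length_eq.mp h)).symm
        have hs₁rnn : ¬ s₁.reverse.Nil := by
          rw [SimpleGraph.Walk.not_nil_iff_lt_length, SimpleGraph.Walk.length_reverse]
          rw [SimpleGraph.Walk.not_nil_iff_lt_length] at hs₁nn; exact hs₁nn
        set w₁ := s₁.reverse.getVert 1 with hw₁def
        set w₂ := s₂.getVert 1 with hw₂def
        have hw₁adj : T.Adj ℓ w₁ := s₁.reverse.adj_snd hs₁rnn
        have hw₂adj : T.Adj ℓ w₂ := s₂.adj_snd hs₂nn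
        have hw₁sup : w₁ ∈ s₁.support := by
          have : w₁ ∈ s₁.reverse.support :=
            SimpleGraph.Walk.mem_support_iff_exists_getVert.mpr
              ⟨1, rfl, by
                rw [SimpleGraph.Walk.length_reverse]
                rw [SimpleGraph.Walk.not_nil_iff_lt_length] at hs₁nn; exact hs₁nn⟩
          rwa [SimpleGraph.Walk.support_reverse, List.mem_reverse] at this
        have hw₂sup : w₂ ∈ s₂.support :=
          SimpleGraph.Walk.mem_support_iff_exists_getVert.mpr
            ⟨1, rfl, by rw [SimpleGraph.Walk.not_nil_iff_lt_length] at hs₂nn; exact hs₂nn⟩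
        have hw₁F : w₁ ∈ (F : Set ι) := hsF _ (s.support_takeUntil_subset hℓs hw₁sup)
        have hw₂F : w₂ ∈ (F : Set ι) := hsF _ (s.support_dropUntil_subset hℓs hw₂sup)
        have e₁ : w₁ = m₀ := conseq w₁ hw₁adj hw₁F
        have e₂ : w₂ = m₀ := conseq w₂ hw₂adj hw₂F
        -- contradiction with nodup
        have hsupp : s.support = s₁.support ++ s₂.support.tail := by
          conv_lhs => rw [← s.take_spec hℓs]
          exact SimpleGraph.Walk.support_append _ _
        have hnodup := hs.support_nodup
        rw [hsupp] at hnodup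
        rcases List.nodup_append'.mp hnodup with ⟨_, _, hdisj⟩
        have hw₂tail : w₂ ∈ s₂.support.tail := by
          rw [SimpleGraph.Walk.support_eq_cons] at hw₂sup
          rcases List.mem_cons.mp hw₂sup with h | h
          · exact absurd h.symm hw₂adj.ne
          · exact h
        exact hdisj hw₁sup (by rwa [e₂, ← e₁] at hw₂tail)
      -- case split
      by_cases hA : ∃ x ∈ S, ∀ i ∈ F, x ∈ Bx i → i = ℓ
      · obtain ⟨x, hxS, hall⟩ := hA
        obtain ⟨i, hiF, hxi⟩ := hcov x hxS
        have hxℓ : x ∈ Bx ℓ := by rwa [hall i hiF hxi] at hxi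
        refine ⟨x, hxS, ℓ, hxℓ, fun y hy hR => ?_⟩
        obtain ⟨j, hjF, hxj, hyj⟩ := hcov2 x hxS y hy hR
        rwa [hall j hjF hxj] at hyj
      · push_neg at hA
        -- every x has a bag in F other than ℓ
        have hB : ∀ x ∈ S, ∃ i ∈ F.erase ℓ, x ∈ Bx i := by
          intro x hxS
          obtain ⟨i, hiF, hxi, hine⟩ := hA x hxS
          exact ⟨i, Finset.mem_erase.mpr ⟨hine, hiF⟩, hxi⟩
        have hssub : F.erase ℓ ⊂ F := Finset.erase_ssubset hℓF
        -- helper: if x ∈ Bx ℓ then x ∈ Bx m₀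
        have hstep : ∀ x ∈ S, x ∈ Bx ℓ → x ∈ Bx m₀ := by
          intro x hxS hxℓ
          obtain ⟨i, hiF', hxi⟩ := hB x hxS
          have hiF : i ∈ F := (Finset.mem_erase.mp hiF').2
          have hiℓ : i ≠ ℓ := (Finset.mem_erase.mp hiF').1
          have hpcx : PC T ({i | x ∈ Bx i} ∩ ↑F) := pc_inter ha (hx2 x hxS) hPC
          obtain ⟨s, hs, hsmem⟩ := hpcx ℓ ⟨hxℓ, hℓF⟩ i ⟨hxi, hiF⟩
          have hsnn : ¬ s.Nil := by
            intro h
            exact hiℓ (SimpleGraph.Walk.eq_of_length_eq_zero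
              (SimpleGraph.Walk.nil_iff_length_eq.mp h)).symm
          set w := s.getVert 1 with hwdef
          have hwadj : T.Adj ℓ w := s.adj_snd hsnn
          have hwsup : w ∈ s.support :=
            SimpleGraph.Walk.mem_support_iff_exists_getVert.mpr
              ⟨1, rfl, by rw [SimpleGraph.Walk.not_nil_iff_lt_length] at hsnn; exact hsnn⟩
          have hwmem := hsmem w hwsup
          have : w = m₀ := conseq w hwadj hwmem.2
          rw [← this]; exact hwmem.1
        -- verify IH hypotheses for F.erase ℓ
        have hPC' : PC T ↑(F.erase ℓ) := by
          intro y hy z hz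
          obtain ⟨s, hs, hsF⟩ := hPC y (Finset.mem_coe.mpr (Finset.mem_erase.mp hy).2)
            z (Finset.mem_coe.mpr (Finset.mem_erase.mp hz).2)
          have hℓs : ℓ ∉ s.support := claim3 y hy z hz s hs hsF
          refine ⟨s, hs, fun a hma => ?_⟩
          have haF : a ∈ (F : Set ι) := hsF a hma
          have hane : a ≠ ℓ := fun h => hℓs (h ▸ hma)
          exact Finset.mem_coe.mpr (Finset.mem_erase.mpr ⟨hane, Finset.mem_coe.mp haF⟩)
        have hcov' : ∀ x ∈ S, ∃ i ∈ F.erase ℓ, x ∈ Bx i := hB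
        have hcov2' : ∀ x ∈ S, ∀ y ∈ S, R x y → ∃ i ∈ F.erase ℓ, x ∈ Bx i ∧ y ∈ Bx i := by
          intro x hxS y hyS hR
          obtain ⟨j, hjF, hxj, hyj⟩ := hcov2 x hxS y hyS hR
          by_cases hjℓ : j = ℓ
          · subst hjℓ
            refine ⟨m₀, Finset.mem_erase.mpr ⟨hm₀ne, hm₀F⟩, hstep x hxS hxj, hstep y hyS hyj⟩
          · exact ⟨j, Finset.mem_erase.mpr ⟨hjℓ, hjF⟩, hxj, hyj⟩
        exact IH (F.erase ℓ) hssub hPC' hcov' hcov2'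


lemma core {X : Type} (hc : T.Connected) (ha : T.IsAcyclic)
    (Bx : ι → Set X) (R : X → X → Prop) (S : Finset X) (hS : S.Nonempty)
    (h1 : ∀ x ∈ S, ∃ i, x ∈ Bx i)
    (h2 : ∀ x ∈ S, PC T {i | x ∈ Bx i})
    (h3 : ∀ x ∈ S, ∀ y ∈ S, R x y → ∃ i, x ∈ Bx i ∧ y ∈ Bx i) :
    ∃ x ∈ S, ∃ i, x ∈ Bx i ∧ ∀ y ∈ S, R x y → y ∈ Bx i := by
  classical
  obtain ⟨i₀⟩ := hc.nonempty
  have hpick1 : ∀ x : X, ∃ i : ι, (x ∈ S → x ∈ Bx i) := by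
    intro x
    by_cases hx : x ∈ S
    · obtain ⟨i, hi⟩ := h1 x hx; exact ⟨i, fun _ => hi⟩
    · exact ⟨i₀, fun hx' => absurd hx' hx⟩
  choose ix hix using hpick1
  have hpick2 : ∀ z : X × X, ∃ i : ι,
      (z.1 ∈ S → z.2 ∈ S → R z.1 z.2 → z.1 ∈ Bx i ∧ z.2 ∈ Bx i) := by
    intro z
    by_cases hx : z.1 ∈ S ∧ z.2 ∈ S ∧ R z.1 z.2
    · obtain ⟨i, hi⟩ := h3 z.1 hx.1 z.2 hx.2.1 hx.2.2
      exact ⟨i, fun _ _ _ => hi⟩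
    · refine ⟨i₀, fun h1' h2' h3' => absurd ⟨h1', h2', h3'⟩ hx⟩
  choose jf hjf using hpick2
  set pp : ι → ι → { w : ι × ι → Prop // True } := fun _ _ => ⟨fun _ => True, trivial⟩ with hppdef
  -- the actual paths
  have hpw : ∀ a b : ι, ∃ p : T.Walk a b, p.IsPath := by
    intro a b
    obtain ⟨w⟩ := hc.preconnected a b
    exact ⟨w.bypass, w.bypass_isPath⟩
  choose pth hpth using hpw
  set F₀ : Finset ι := S.image ix ∪ (S ×ˢ S).image jf with hF₀def
  set F : Finset ι := F₀.biUnion (fun a => F₀.biUnion (fun b => (pth a b).support.toFinset))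
    with hFdef
  have hF₀F : ∀ a ∈ F₀, a ∈ F := by
    intro a ha
    rw [hFdef, Finset.mem_biUnion]
    exact ⟨a, ha, Finset.mem_biUnion.mpr ⟨a, ha,
      List.mem_toFinset.mpr ((pth a a).start_mem_support)⟩⟩
  have hsupF : ∀ a ∈ F₀, ∀ b ∈ F₀, ∀ m ∈ (pth a b).support, m ∈ F := by
    intro a ha b hb m hm
    rw [hFdef, Finset.mem_biUnion]
    exact ⟨a, ha, Finset.mem_biUnion.mpr ⟨b, hb, List.mem_toFinset.mpr hm⟩⟩
  have hPCF : PC T ↑F := by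
    apply pc_of_walks
    intro i hi j hj
    rw [Finset.mem_coe, hFdef, Finset.mem_biUnion] at hi hj
    obtain ⟨a, ha, hi'⟩ := hi
    obtain ⟨b, hb, hi''⟩ := Finset.mem_biUnion.mp hi'
    have hi3 : i ∈ (pth a b).support := List.mem_toFinset.mp hi''
    obtain ⟨cc, hcc, hj'⟩ := hj
    obtain ⟨d, hd, hj''⟩ := Finset.mem_biUnion.mp hj'
    have hj3 : j ∈ (pth cc d).support := List.mem_toFinset.mp hj''
    set w1 := (pth a b).dropUntil i hi3
    set w2 := pth b cc
    set w3 := (pth cc d).takeUntil j hj3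
    refine ⟨(w1.append w2).append w3, ?_⟩
    intro m hm
    rw [SimpleGraph.Walk.mem_support_append_iff] at hm
    rcases hm with hm | hm
    · rw [SimpleGraph.Walk.mem_support_append_iff] at hm
      rcases hm with hm | hm
      · exact Finset.mem_coe.mpr
          (hsupF a ha b hb m ((pth a b).support_dropUntil_subset hi3 hm))
      · exact Finset.mem_coe.mpr (hsupF b hb cc hcc m hm)
    · exact Finset.mem_coe.mpr
        (hsupF cc hcc d hd m ((pth cc d).support_takeUntil_subset hj3 hm))
  apply core_aux hc ha Bx R S hS h2 F hPCF
  · intro x hx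
    refine ⟨ix x, hF₀F _ ?_, hix x hx⟩
    rw [hF₀def, Finset.mem_union]
    exact Or.inl (Finset.mem_image.mpr ⟨x, hx, rfl⟩)
  · intro x hx y hy hR
    obtain ⟨h1', h2'⟩ := hjf (x, y) hx hy hR
    refine ⟨jf (x, y), hF₀F _ ?_, h1', h2'⟩
    rw [hF₀def, Finset.mem_union]
    exact Or.inr (Finset.mem_image.mpr ⟨(x, y), Finset.mem_product.mpr ⟨hx, hy⟩, rfl⟩)

lemma greedy {X : Type} (R : X → X → Prop) (hsym : ∀ x y, R x y → R y x) (N : ℕ)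
    (S₀ : Finset X)
    (hfind : ∀ S : Finset X, S ⊆ S₀ → S.Nonempty →
      ∃ x ∈ S, ∃ t : Finset X, x ∈ t ∧ t.card ≤ N ∧ ∀ y ∈ S, R x y → y ∈ t) :
    ∃ φ : X → ℕ, (∀ x ∈ S₀, φ x < N) ∧
      (∀ x ∈ S₀, ∀ y ∈ S₀, x ≠ y → R x y → φ x ≠ φ y) := by
  classical
  suffices h : ∀ S : Finset X, S ⊆ S₀ →
      ∃ φ : X → ℕ, (∀ x ∈ S, φ x < N) ∧
        (∀ x ∈ S, ∀ y ∈ S, x ≠ y → R x y → φ x ≠ φ y) by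
    exact h S₀ (le_refl _)
  intro S
  induction S using Finset.strongInduction with
  | _ S IH =>
    intro hsub
    rcases S.eq_empty_or_nonempty with rfl | hne
    · exact ⟨fun _ => 0, by simp, by simp⟩
    obtain ⟨x, hxS, t, hxt, htcard, ht⟩ := hfind S hsub hne
    have hssub : S.erase x ⊂ S := Finset.erase_ssubset hxS
    obtain ⟨φ', hφ'lt, hφ'prop⟩ := IH (S.erase x) hssub (le_trans (Finset.erase_subset _ _) hsub)
    set used := ((S.erase x).filter (fun y => R x y)).image φ' with husedef
    have hfilter : (S.erase x).filter (fun y => R x y) ⊆ t.erase x := by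
      intro y hy
      rw [Finset.mem_filter] at hy
      obtain ⟨hy1, hy2⟩ := hy
      refine Finset.mem_erase.mpr ⟨(Finset.mem_erase.mp hy1).1, ?_⟩
      exact ht y (Finset.mem_erase.mp hy1).2 hy2
    have husedcard : used.card < N := by
      calc used.card ≤ ((S.erase x).filter (fun y => R x y)).card := Finset.card_image_le
        _ ≤ (t.erase x).card := Finset.card_le_card hfilter
        _ < t.card := Finset.card_erase_lt_of_mem hxt
        _ ≤ N := htcard
    have hex : ∃ c ∈ Finset.range N, c ∉ used := by
      by_contra hcon
      push_neg at hcon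
      have : Finset.range N ⊆ used := fun c hc => hcon c hc
      have := Finset.card_le_card this
      rw [Finset.card_range] at this
      omega
    obtain ⟨c, hcr, hcnot⟩ := hex
    rw [Finset.mem_range] at hcr
    refine ⟨Function.update φ' x c, ?_, ?_⟩
    · intro z hz
      by_cases hzx : z = x
      · rw [hzx, Function.update_self]; exact hcr
      · rw [Function.update_of_ne hzx]
        exact hφ'lt z (Finset.mem_erase.mpr ⟨hzx, hz⟩)
    · intro z₁ hz₁ z₂ hz₂ hne' hR
      by_cases h1 : z₁ = x
      · subst h1
        have h2 : z₂ ≠ z₁ := fun h => hne' h.symm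
        rw [Function.update_self, Function.update_of_ne h2]
        intro heq
        apply hcnot
        rw [husedef]
        exact Finset.mem_image.mpr ⟨z₂, Finset.mem_filter.mpr
          ⟨Finset.mem_erase.mpr ⟨h2, hz₂⟩, hR⟩, heq.symm⟩
      · by_cases h2 : z₂ = x
        · subst h2
          rw [Function.update_self, Function.update_of_ne h1]
          intro heq
          apply hcnot
          rw [husedef]
          exact Finset.mem_image.mpr ⟨z₁, Finset.mem_filter.mpr
            ⟨Finset.mem_erase.mpr ⟨h1, hz₁⟩, hsym _ _ hR⟩, heq⟩
        · rw [Function.update_of_ne h1, Function.update_of_ne h2]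
          exact hφ'prop z₁ (Finset.mem_erase.mpr ⟨h1, hz₁⟩) z₂
            (Finset.mem_erase.mpr ⟨h2, hz₂⟩) hne' hR


end StrongColoringAux

open StrongColoringAux SimpleGraph

theorem stmt5 {V : Type} [Fintype V] (G : SimpleGraph V) (k Δ : ℕ)
    (htw : TreewidthAtMost G k) (hΔ : ∀ v, (G.neighborSet v).ncard ≤ Δ) :
    strongChromaticIndex G ≤ (k + 1) * (Δ + 1) := by
  classical
  obtain ⟨ι, T, B, hTc, hTa, hvert, hedge, hsubt, hcard⟩ := htw
  set R : Sym2 V → Sym2 V → Prop := fun e f => ∃ a ∈ e, ∃ b ∈ f, a = b ∨ G.Adj a b with hRdef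
  have hsym : ∀ e f, R e f → R f e := by
    rintro e f ⟨a, ha, b, hb, hab⟩
    refine ⟨b, hb, a, ha, ?_⟩
    rcases hab with h | h
    · exact Or.inl h.symm
    · exact Or.inr h.symm
  set Bx : ι → Set (Sym2 V) := fun i => {e | e ∈ G.edgeSet ∧ ∃ a ∈ e, a ∈ B i} with hBxdef
  have hedgefin : G.edgeSet.Finite := Set.toFinite _
  set S₀ : Finset (Sym2 V) := hedgefin.toFinset with hS₀def
  have hmemS₀ : ∀ e, e ∈ S₀ ↔ e ∈ G.edgeSet := fun e => Set.Finite.mem_toFinset _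
  have hpcB : ∀ v : V, PC T {i | v ∈ B i} := fun v => pc_of_induce_connected (hsubt v)
  -- h1 : every edge is in some bag
  have h1 : ∀ e ∈ G.edgeSet, ∃ i, e ∈ Bx i := by
    intro e
    induction e using Sym2.ind with
    | _ u v =>
      intro he
      obtain ⟨i, hui, hvi⟩ := hedge (G.mem_edgeSet.mp he)
      exact ⟨i, he, u, Sym2.mem_mk_left _ _, hui⟩
  -- h2 : the set of bags of an edge is path-closed
  have h2 : ∀ e ∈ G.edgeSet, PC T {i | e ∈ Bx i} := by
    intro e
    induction e using Sym2.ind with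
    | _ u v =>
      intro he
      obtain ⟨i₀, hui₀, hvi₀⟩ := hedge (G.mem_edgeSet.mp he)
      apply pc_of_walks
      have hmem : ∀ m : ι, s(u, v) ∈ Bx m ↔ (u ∈ B m ∨ v ∈ B m) := by
        intro m
        constructor
        · rintro ⟨_, a, ha, haB⟩
          rcases Sym2.mem_iff.mp ha with rfl | rfl
          · exact Or.inl haB
          · exact Or.inr haB
        · rintro (h | h)
          · exact ⟨he, u, Sym2.mem_mk_left _ _, h⟩
          · exact ⟨he, v, Sym2.mem_mk_right _ _, h⟩
      intro i hi j hj
      have hwalk1 : ∃ w : T.Walk i i₀, ∀ m ∈ w.support, s(u, v) ∈ Bx m := by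
        rcases (hmem i).mp hi with h | h
        · obtain ⟨p, _, hmemp⟩ := hpcB u i h i₀ hui₀
          exact ⟨p, fun m hm => (hmem m).mpr (Or.inl (hmemp m hm))⟩
        · obtain ⟨p, _, hmemp⟩ := hpcB v i h i₀ hvi₀
          exact ⟨p, fun m hm => (hmem m).mpr (Or.inr (hmemp m hm))⟩
      have hwalk2 : ∃ w : T.Walk i₀ j, ∀ m ∈ w.support, s(u, v) ∈ Bx m := by
        rcases (hmem j).mp hj with h | h
        · obtain ⟨p, _, hmemp⟩ := hpcB u i₀ hui₀ j h
          exact ⟨p, fun m hm => (hmem m).mpr (Or.inl (hmemp m hm))⟩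
        · obtain ⟨p, _, hmemp⟩ := hpcB v i₀ hvi₀ j h
          exact ⟨p, fun m hm => (hmem m).mpr (Or.inr (hmemp m hm))⟩
      obtain ⟨w1, hw1⟩ := hwalk1
      obtain ⟨w2, hw2⟩ := hwalk2
      refine ⟨w1.append w2, fun m hm => ?_⟩
      rcases (SimpleGraph.Walk.mem_support_append_iff _ _ ).mp hm with h | h
      · exact hw1 m h
      · exact hw2 m h
  -- h3 : near edges share a bag
  have h3 : ∀ e ∈ G.edgeSet, ∀ f ∈ G.edgeSet, R e f → ∃ i, e ∈ Bx i ∧ f ∈ Bx i := by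
    intro e he f hf hR
    obtain ⟨a, ha, b, hb, hab⟩ := hR
    rcases hab with rfl | hadj
    · obtain ⟨i, hi⟩ := hvert a
      exact ⟨i, ⟨he, a, ha, hi⟩, ⟨hf, a, hb, hi⟩⟩
    · obtain ⟨i, hai, hbi⟩ := hedge hadj
      exact ⟨i, ⟨he, a, ha, hai⟩, ⟨hf, b, hb, hbi⟩⟩
  -- the bags of the near-graph are small
  have hbag : ∀ i : ι, ∃ t : Finset (Sym2 V),
      (∀ e, e ∈ Bx i → e ∈ t) ∧ t.card ≤ (k + 1) * Δ := by
    intro i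
    refine ⟨(B i).biUnion (fun a => (Set.toFinite (G.incidenceSet a)).toFinset), ?_, ?_⟩
    · rintro e ⟨heE, a, hae, haB⟩
      exact Finset.mem_biUnion.mpr ⟨a, haB, (Set.Finite.mem_toFinset _).mpr ⟨heE, hae⟩⟩
    · calc ((B i).biUnion (fun a => (Set.toFinite (G.incidenceSet a)).toFinset)).card
          ≤ ∑ a ∈ B i, ((Set.toFinite (G.incidenceSet a)).toFinset).card :=
            Finset.card_biUnion_le
        _ ≤ (B i).card * Δ := by
            rw [← smul_eq_mul]
            apply Finset.sum_le_card_nsmul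
            intro a _
            have h1 : ((Set.toFinite (G.incidenceSet a)).toFinset).card
                = (G.incidenceSet a).ncard :=
              (Set.ncard_eq_toFinset_card _ _).symm
            have h2 : (G.incidenceSet a).ncard = (G.neighborSet a).ncard := by
              rw [← Nat.card_coe_set_eq, ← Nat.card_coe_set_eq]
              exact Nat.card_congr (G.incidenceSetEquivNeighborSet a)
            rw [h1, h2]
            exact hΔ a
        _ ≤ (k + 1) * Δ := Nat.mul_le_mul_right Δ (hcard i)
  have hfind : ∀ S : Finset (Sym2 V), S ⊆ S₀ → S.Nonempty →
      ∃ x ∈ S, ∃ t : Finset (Sym2 V), x ∈ t ∧ t.card ≤ (k + 1) * Δ ∧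
        ∀ y ∈ S, R x y → y ∈ t := by
    intro S hsub hne
    obtain ⟨e, heS, i, hei, hall⟩ := core hTc hTa Bx R S hne
      (fun x hx => h1 x ((hmemS₀ x).mp (hsub hx)))
      (fun x hx => h2 x ((hmemS₀ x).mp (hsub hx)))
      (fun x hx y hy hR => h3 x ((hmemS₀ x).mp (hsub hx)) y ((hmemS₀ y).mp (hsub hy)) hR)
    obtain ⟨t, htmem, htcard⟩ := hbag i
    exact ⟨e, heS, t, htmem e hei, htcard, fun y hy hR => htmem y (hall y hy hR)⟩
  obtain ⟨φ, hφlt, hφprop⟩ := greedy R hsym ((k + 1) * Δ) S₀ hfind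
  have hCpos : 0 < (k + 1) * (Δ + 1) := by positivity
  have hNC : (k + 1) * Δ < (k + 1) * (Δ + 1) := by nlinarith
  set c : Sym2 V → Fin ((k + 1) * (Δ + 1)) := fun e =>
    if h : φ e < (k + 1) * (Δ + 1) then ⟨φ e, h⟩ else ⟨0, hCpos⟩ with hcdef
  have hstrong : IsStrongEdgeColoring G c := by
    intro t
    constructor
    · intro e he; exact he.1
    · rintro e ⟨heE, hec⟩ f ⟨hfE, hfc⟩ hef a ha b hb
      have hkey : ¬ R e f := by
        intro hR
        have he₀ : e ∈ S₀ := (hmemS₀ e).mpr heE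
        have hf₀ : f ∈ S₀ := (hmemS₀ f).mpr hfE
        have hne := hφprop e he₀ f hf₀ hef hR
        have hlt1 : φ e < (k + 1) * (Δ + 1) := lt_trans (hφlt e he₀) hNC
        have hlt2 : φ f < (k + 1) * (Δ + 1) := lt_trans (hφlt f hf₀) hNC
        apply hne
        have h1 : c e = ⟨φ e, hlt1⟩ := by rw [hcdef]; exact dif_pos hlt1
        have h2 : c f = ⟨φ f, hlt2⟩ := by rw [hcdef]; exact dif_pos hlt2
        have := (h1.symm.trans hec).trans ((h2.symm.trans hfc).symm)
        exact congrArg Fin.val this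
      constructor
      · intro hab; exact hkey ⟨a, ha, b, hb, Or.inl hab⟩
      · intro hadj; exact hkey ⟨a, ha, b, hb, Or.inr hadj⟩
  exact Nat.sInf_le ⟨c, hstrong⟩
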